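/- Let k > 2 and m ≥ 2 be integers, and let d ≥ 1. For any d distinct primitive k-th roots of unity ζ₁,...,ζ_d, if d ≤ m - 1 then the real part of the product (m - ζ₁)⋯(m - ζ_d) is at least (1/2)(m-1)^d. -/

import Mathlib

open Complex Real

lemma abs_arg_le_of_re_pos {z : ℂ} (hz : 0 < z.re) :
    |Complex.arg z| ≤ |z.im| / z.re := by
  have hlt : |Complex.arg z| < Real.pi / 2 :=
    Complex.abs_arg_lt_pi_div_two_iff.mpr (Or.inl hz)
  have htan : Real.tan (Complex.arg z) = z.im / z.re := Complex.tan_arg z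
  rcases lt_trichotomy (Complex.arg z) 0 with h | h | h
  · have h1 : 0 < -Complex.arg z := by linarith
    have h2 : -Complex.arg z < Real.pi / 2 := by
      have := neg_lt_of_abs_lt hlt; linarith
    have h3 := Real.lt_tan h1 h2
    rw [Real.tan_neg, htan] at h3
    have h4 : -Complex.arg z ≤ |z.im| / z.re := by
      calc -Complex.arg z ≤ -(z.im / z.re) := le_of_lt h3
        _ ≤ |z.im / z.re| := neg_le_abs _
        _ = |z.im| / z.re := by rw [abs_div, abs_of_pos hz]
    rw [abs_of_neg h]; exact h4
  · rw [h, abs_zero]; positivity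
  · have h2 : Complex.arg z < Real.pi / 2 := lt_of_abs_lt hlt
    have h3 := Real.lt_tan h h2
    rw [htan] at h3
    rw [abs_of_pos h]
    calc Complex.arg z ≤ z.im / z.re := le_of_lt h3
      _ ≤ |z.im / z.re| := le_abs_self _
      _ = |z.im| / z.re := by rw [abs_div, abs_of_pos hz]

/-- If `ζ₁, …, ζ_d` are pairwise distinct primitive `k`-th roots of unity (`k > 2`),
`m ≥ 2` and `1 ≤ d ≤ m - 1`, then `Re((m - ζ₁)⋯(m - ζ_d)) ≥ (1/2)(m-1)^d`. -/
theorem re_prod_sub_primitive_roots_ge (k m d : ℕ) (hk : 2 < k) (hm : 2 ≤ m)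
    (hd : 1 ≤ d) (hdm : d ≤ m - 1) (ζ : Fin d → ℂ)
    (hinj : Function.Injective ζ) (hprim : ∀ i, IsPrimitiveRoot (ζ i) k) :
    (1 / 2 : ℝ) * ((m : ℝ) - 1) ^ d ≤ (∏ i, ((m : ℂ) - ζ i)).re := by
  set a : ℝ := (m : ℝ) - 1 with ha
  have hm1 : (2 : ℝ) ≤ (m : ℝ) := by exact_mod_cast hm
  have ha1 : (1 : ℝ) ≤ a := by rw [ha]; linarith
  have ha0 : (0 : ℝ) < a := by linarith
  have hda : (d : ℝ) ≤ a := by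
    have h := hdm
    have : (d : ℝ) ≤ ((m - 1 : ℕ) : ℝ) := by exact_mod_cast h
    rwa [Nat.cast_sub (by omega), Nat.cast_one] at this
  set z : Fin d → ℂ := fun i => (m : ℂ) - ζ i with hz
  have habs : ∀ i, ‖ζ i‖ = 1 := fun i =>
    Complex.norm_eq_one_of_pow_eq_one (hprim i).pow_eq_one (by omega)
  have hre : ∀ i, a ≤ (z i).re := by
    intro i
    have h1 : (ζ i).re ≤ 1 := (Complex.re_le_norm _).trans (le_of_eq (habs i))
    have : (z i).re = (m : ℝ) - (ζ i).re := by
      simp [hz, Complex.sub_re]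
    rw [this, ha]; linarith
  have him : ∀ i, |(z i).im| ≤ 1 := by
    intro i
    have h1 := Complex.abs_im_le_norm (ζ i)
    rw [habs i] at h1
    have : (z i).im = -(ζ i).im := by simp [hz, Complex.sub_im]
    rw [this, abs_neg]; exact h1
  have hrepos : ∀ i, 0 < (z i).re := fun i => lt_of_lt_of_le ha0 (hre i)
  have harg : ∀ i, |Complex.arg (z i)| ≤ 1 / a := by
    intro i
    calc |Complex.arg (z i)| ≤ |(z i).im| / (z i).re := abs_arg_le_of_re_pos (hrepos i)
      _ ≤ 1 / a := div_le_div₀ zero_le_one (him i) ha0 (hre i)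
  -- polar decomposition of the product
  set S : ℝ := ∑ i, Complex.arg (z i) with hS
  set R : ℝ := ∏ i, ‖z i‖ with hR
  have hpolar : ∏ i, z i = (R : ℂ) * Complex.exp ((S : ℂ) * Complex.I) := by
    have h1 : ∀ i ∈ Finset.univ, z i =
        (‖z i‖ : ℂ) * Complex.exp ((Complex.arg (z i) : ℂ) * Complex.I) := by
      intro i _
      exact (Complex.norm_mul_exp_arg_mul_I (z i)).symm
    rw [Finset.prod_congr rfl h1, Finset.prod_mul_distrib, ← Complex.exp_sum]
    congr 1
    · rw [hR]; push_cast; ring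
    · rw [← Finset.sum_mul, hS]; push_cast; ring
  have hrprod : (∏ i, z i).re = R * Real.cos S := by
    rw [hpolar, Complex.re_ofReal_mul, Complex.exp_ofReal_mul_I_re]
  have hSle : |S| ≤ 1 := by
    calc |S| ≤ ∑ i, |Complex.arg (z i)| := Finset.abs_sum_le_sum_abs _ _
      _ ≤ ∑ _i : Fin d, 1 / a := Finset.sum_le_sum fun i _ => harg i
      _ = d * (1 / a) := by simp
      _ ≤ 1 := by rw [mul_one_div, div_le_one ha0]; exact hda
  have hcos : (1 / 2 : ℝ) ≤ Real.cos S := by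
    have h1 : Real.cos 1 ≤ Real.cos |S| := by
      apply Real.cos_le_cos_of_nonneg_of_le_pi (abs_nonneg S) _ hSle
      linarith [Real.pi_gt_three]
    have h2 : (1 / 2 : ℝ) ≤ Real.cos 1 := by
      have := Real.one_sub_sq_div_two_le_cos (x := 1)
      norm_num at this; linarith
    rw [Real.cos_abs] at h1
    linarith
  have hRge : a ^ d ≤ R := by
    rw [hR]
    calc a ^ d = ∏ _i : Fin d, a := by simp
      _ ≤ ∏ i, ‖z i‖ :=
        Finset.prod_le_prod (fun i _ => le_of_lt ha0)
          (fun i _ => (hre i).trans (Complex.re_le_norm _))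
  have hR0 : 0 ≤ R := le_trans (by positivity) hRge
  have : a ^ d * (1 / 2) ≤ R * Real.cos S :=
    mul_le_mul hRge hcos (by norm_num) hR0
  rw [hrprod, ha]
  rw [ha] at this
  linarith
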